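/- Let 0 < p < ∞, 1 ≤ M < ∞, and let f : 𝔻 → ℂ be any function. Define N_M(f)(ξ) = sup_{z ∈ Γ_M(ξ)} |f(z)| for ξ in the closed unit disc, and Φ(re^{iθ}) = (1/(1−r)) ∫_{|t−θ|<1−r} N_M(f)(re^{it})^p dt. Then for each fixed θ ∈ ℝ, the map r ↦ Φ(re^{iθ}) is non-decreasing on [0,1). -/

import Mathlib

open MeasureTheory Set
open scoped ENNReal NNReal

/-- Distance between arguments modulo 2π. -/
noncomputable def argDist (z w : ℂ) : ℝ :=
  |Real.Angle.toReal ((Complex.arg z - Complex.arg w : ℝ) : Real.Angle)|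

/-- The non-tangential approach region (cone) with vertex `ξ` and opening `M`. -/
noncomputable def cone (M : ℝ) (ξ : ℂ) : Set ℂ :=
  {z : ℂ | ‖z‖ < 1 ∧ argDist z ξ < M * (‖ξ‖ - ‖z‖)}

/-- The non-tangential maximal function of `f`, with values in `ℝ≥0∞`. -/
noncomputable def NM (M : ℝ) (f : ℂ → ℂ) (ξ : ℂ) : ℝ≥0∞ :=
  ⨆ z ∈ cone M ξ, (‖f z‖₊ : ℝ≥0∞)

/-- The reduced representative of an angle given by a real number is at most
that number in absolute value. -/
lemma abs_toReal_coe_le (c : ℝ) : |((c : Real.Angle)).toReal| ≤ |c| := by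
  have hpi : |((c : Real.Angle)).toReal| ≤ Real.pi := Real.Angle.abs_toReal_le_pi _
  obtain ⟨k, hk⟩ : ∃ k : ℤ, c - ((c : Real.Angle)).toReal = (k : ℝ) * (2 * Real.pi) := by
    refine ⟨toIocDiv Real.two_pi_pos (-Real.pi) c, ?_⟩
    rw [Real.Angle.toReal_coe]
    have := self_sub_toIocMod Real.two_pi_pos (-Real.pi) c
    rw [zsmul_eq_mul] at this
    exact this
  rcases eq_or_ne k 0 with hk0 | hk0
  · rw [hk0] at hk
    simp only [Int.cast_zero, zero_mul, sub_eq_zero] at hk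
    rw [← hk]
  · have h1 : (1 : ℝ) ≤ |(k : ℝ)| := by
      rw [← Int.cast_abs]
      exact_mod_cast Int.one_le_abs hk0
    have hpos := Real.pi_pos
    have habs : |(k : ℝ) * (2 * Real.pi)| = |(k : ℝ)| * (2 * Real.pi) := by
      rw [abs_mul, abs_of_pos Real.two_pi_pos]
    have : |c| ≥ |(k : ℝ) * (2 * Real.pi)| - |((c : Real.Angle)).toReal| := by
      have : (k : ℝ) * (2 * Real.pi) = c - ((c : Real.Angle)).toReal := hk.symm
      calc |(k : ℝ) * (2 * Real.pi)| - |((c : Real.Angle)).toReal|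
          = |c - ((c : Real.Angle)).toReal| - |((c : Real.Angle)).toReal| := by rw [← this]
        _ ≤ |c| := by
            have h2 : |c - (((c : Real.Angle)).toReal)| ≤ |c| + |(((c : Real.Angle)).toReal)| :=
              abs_sub c _
            linarith [abs_nonneg (((c : Real.Angle)).toReal)]
    have h2 : |(k : ℝ)| * (2 * Real.pi) ≥ 2 * Real.pi := by nlinarith
    rw [habs] at this
    linarith

lemma abs_r_exp (a t : ℝ) (ha : 0 ≤ a) :
    ‖(a : ℂ) * Complex.exp ((t : ℂ) * Complex.I)‖ = a := by
  rw [norm_mul, Complex.norm_exp_ofReal_mul_I, mul_one, Complex.norm_of_nonneg ha]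

lemma arg_r_exp (a t : ℝ) (ha : 0 < a) :
    ((Complex.arg ((a : ℂ) * Complex.exp ((t : ℂ) * Complex.I)) : ℝ) : Real.Angle)
      = (t : Real.Angle) := by
  rw [Complex.arg_real_mul _ ha, Complex.arg_exp_mul_I, ← Real.Angle.toReal_coe,
    Real.Angle.coe_toReal]

lemma cone_subset (M r s K θ : ℝ) (hM : 1 ≤ M) (hr : 0 < r) (hrs : r ≤ s) (hK : |K| < 1) :
    cone M ((r : ℂ) * Complex.exp ((((θ + (1 - r) * K) : ℝ) : ℂ) * Complex.I)) ⊆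
      cone M ((s : ℂ) * Complex.exp ((((θ + (1 - s) * K) : ℝ) : ℂ) * Complex.I)) := by
  intro z hz
  have hs : 0 < s := lt_of_lt_of_le hr hrs
  obtain ⟨hz1, hz2⟩ := hz
  rw [abs_r_exp _ _ hr.le] at hz2
  refine ⟨hz1, ?_⟩
  show argDist z _ < M * (‖_‖ - ‖z‖)
  rw [abs_r_exp _ _ hs.le]
  set αr : ℝ := θ + (1 - r) * K with hαr
  set αs : ℝ := θ + (1 - s) * K with hαs
  have hargr := arg_r_exp r αr hr
  have hargs := arg_r_exp s αs hs
  -- rewrite argDist through angles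
  have hDr : argDist z ((r : ℂ) * Complex.exp ((αr : ℂ) * Complex.I))
      = |(((Complex.arg z - αr : ℝ) : Real.Angle)).toReal| := by
    rw [argDist]
    congr 2
    rw [Real.Angle.coe_sub, Real.Angle.coe_sub, hargr]
  have hDs : argDist z ((s : ℂ) * Complex.exp ((αs : ℂ) * Complex.I))
      = |(((Complex.arg z - αs : ℝ) : Real.Angle)).toReal| := by
    rw [argDist]
    congr 2
    rw [Real.Angle.coe_sub, Real.Angle.coe_sub, hargs]
  rw [hDr] at hz2
  rw [hDs]
  set D : ℝ := (((Complex.arg z - αr : ℝ) : Real.Angle)).toReal with hD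
  have hsplit : ((Complex.arg z - αs : ℝ) : Real.Angle)
      = (((D + (s - r) * K : ℝ)) : Real.Angle) := by
    have h1 : Complex.arg z - αs = (Complex.arg z - αr) + (s - r) * K := by
      rw [hαr, hαs]; ring
    rw [h1, Real.Angle.coe_add, Real.Angle.coe_add, hD, Real.Angle.coe_toReal]
  rw [hsplit]
  have hb1 : |(((D + (s - r) * K : ℝ) : Real.Angle)).toReal| ≤ |D + (s - r) * K| :=
    abs_toReal_coe_le _
  have hb2 : |D + (s - r) * K| ≤ |D| + |(s - r) * K| := abs_add_le _ _
  have hb3 : |(s - r) * K| ≤ M * (s - r) := by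
    rw [abs_mul, abs_of_nonneg (by linarith : (0:ℝ) ≤ s - r)]
    nlinarith [abs_nonneg K]
  have habsz := norm_nonneg z
  nlinarith

lemma NM_mono (M : ℝ) (f : ℂ → ℂ) {ξ ξ' : ℂ} (h : cone M ξ ⊆ cone M ξ') :
    NM M f ξ ≤ NM M f ξ' := by
  rw [NM, NM]
  exact biSup_mono h

lemma NM_zero (M : ℝ) (hM : 1 ≤ M) (f : ℂ → ℂ) : NM M f 0 = 0 := by
  rw [NM]
  have : cone M 0 = ∅ := by
    ext z
    simp only [cone, Set.mem_setOf_eq, Set.mem_empty_iff_false, iff_false, not_and]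
    intro _
    have h1 : 0 ≤ argDist z 0 := abs_nonneg _
    have h2 : M * (‖(0 : ℂ)‖ - ‖z‖) ≤ 0 := by
      have := norm_nonneg z
      simp only [norm_zero, zero_sub]
      nlinarith
    intro hc
    linarith
  simp [this]

/-- Change of variables: scaling a symmetric interval to `(-1, 1)`. -/
lemma scale_lintegral (c θ : ℝ) (hc : 0 < c) (g : ℝ → ℝ≥0∞) :
    ∫⁻ t in Set.Ioo (θ - c) (θ + c), g t
      = ENNReal.ofReal c * ∫⁻ K in Set.Ioo (-1 : ℝ) 1, g (θ + c * K) := by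
  set e : ℝ ≃ᵐ ℝ :=
    ((Homeomorph.mulLeft₀ c hc.ne').trans (Homeomorph.addLeft θ)).toMeasurableEquiv with he_def
  have he : ∀ K, e K = θ + c * K := fun K => rfl
  have hmap : Measure.map e volume = ENNReal.ofReal c⁻¹ • volume := by
    have h0 : (⇑e) = (fun x : ℝ => θ + x) ∘ (fun x : ℝ => c * x) := by
      funext K; simp [he K]
    rw [h0, ← Measure.map_map (measurable_const_add θ) (measurable_const_mul c),
      Real.map_volume_mul_left hc.ne', Measure.map_smul,
      map_add_left_eq_self volume θ, abs_of_pos (inv_pos.mpr hc)]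
  have hpre : e ⁻¹' (Set.Ioo (θ - c) (θ + c)) = Set.Ioo (-1 : ℝ) 1 := by
    ext K
    simp only [Set.mem_preimage, he K, Set.mem_Ioo]
    constructor
    · rintro ⟨h1, h2⟩
      constructor <;> nlinarith
    · rintro ⟨h1, h2⟩
      constructor <;> nlinarith
  have key : ∫⁻ K in Set.Ioo (-1 : ℝ) 1, g (θ + c * K)
      = ENNReal.ofReal c⁻¹ * ∫⁻ t in Set.Ioo (θ - c) (θ + c), g t := by
    calc ∫⁻ K in Set.Ioo (-1 : ℝ) 1, g (θ + c * K)
        = ∫⁻ K in e ⁻¹' (Set.Ioo (θ - c) (θ + c)), g (e K) := by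
          rw [hpre]
          refine lintegral_congr fun K => ?_
          rw [he K]
      _ = ∫⁻ t, g t ∂(Measure.map e (volume.restrict (e ⁻¹' (Set.Ioo (θ - c) (θ + c))))) := by
          rw [MeasureTheory.lintegral_map_equiv]
      _ = ∫⁻ t, g t ∂((Measure.map e volume).restrict (Set.Ioo (θ - c) (θ + c))) := by
          rw [Measure.restrict_map e.measurable measurableSet_Ioo]
      _ = ENNReal.ofReal c⁻¹ * ∫⁻ t in Set.Ioo (θ - c) (θ + c), g t := by
          rw [hmap, Measure.restrict_smul, lintegral_smul_measure, smul_eq_mul]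
  rw [key, ← mul_assoc, ← ENNReal.ofReal_mul hc.le, mul_inv_cancel₀ hc.ne',
    ENNReal.ofReal_one, one_mul]

theorem stmt7 (p M : ℝ) (hp : 0 < p) (hM : 1 ≤ M) (f : ℂ → ℂ) (θ : ℝ) :
    ∀ r s : ℝ, 0 ≤ r → r ≤ s → s < 1 →
      ENNReal.ofReal (1 / (1 - r)) *
        (∫⁻ t in Set.Ioo (θ - (1 - r)) (θ + (1 - r)),
          (NM M f ((r : ℝ) * Complex.exp ((t : ℂ) * Complex.I))) ^ p) ≤
      ENNReal.ofReal (1 / (1 - s)) *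
        (∫⁻ t in Set.Ioo (θ - (1 - s)) (θ + (1 - s)),
          (NM M f ((s : ℝ) * Complex.exp ((t : ℂ) * Complex.I))) ^ p) := by
  intro r s hr hrs hs1
  rcases eq_or_lt_of_le hr with hr0 | hr0
  · -- r = 0 : the left-hand side vanishes
    have hLHS : ∀ t : ℝ, (NM M f ((r : ℝ) * Complex.exp ((t : ℂ) * Complex.I))) ^ p = 0 := by
      intro t
      have : ((r : ℝ) : ℂ) * Complex.exp ((t : ℂ) * Complex.I) = 0 := by
        rw [← hr0]; simp
      rw [this, NM_zero M hM f, ENNReal.zero_rpow_of_pos hp]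
    calc ENNReal.ofReal (1 / (1 - r)) *
          (∫⁻ t in Set.Ioo (θ - (1 - r)) (θ + (1 - r)),
            (NM M f ((r : ℝ) * Complex.exp ((t : ℂ) * Complex.I))) ^ p)
        = ENNReal.ofReal (1 / (1 - r)) *
          (∫⁻ _t in Set.Ioo (θ - (1 - r)) (θ + (1 - r)), (0 : ℝ≥0∞)) := by
          congr 1
          exact lintegral_congr fun t => hLHS t
      _ = 0 := by simp
      _ ≤ _ := zero_le
  · -- 0 < r ≤ s < 1
    have h1r : 0 < 1 - r := by linarith
    have h1s : 0 < 1 - s := by linarith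
    rw [scale_lintegral (1 - r) θ h1r
        (fun t => (NM M f ((r : ℝ) * Complex.exp ((t : ℂ) * Complex.I))) ^ p),
      scale_lintegral (1 - s) θ h1s
        (fun t => (NM M f ((s : ℝ) * Complex.exp ((t : ℂ) * Complex.I))) ^ p),
      ← mul_assoc, ← mul_assoc]
    have hone : ∀ c : ℝ, 0 < c → ENNReal.ofReal (1 / c) * ENNReal.ofReal c = 1 := by
      intro c hc
      rw [← ENNReal.ofReal_mul (by positivity), one_div, inv_mul_cancel₀ hc.ne',
        ENNReal.ofReal_one]
    rw [hone _ h1r, hone _ h1s, one_mul, one_mul]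
    refine setLIntegral_mono' measurableSet_Ioo fun K hK => ?_
    have hKabs : |K| < 1 := abs_lt.mpr ⟨hK.1, hK.2⟩
    refine ENNReal.rpow_le_rpow ?_ hp.le
    refine NM_mono M f ?_
    have := cone_subset M r s K θ hM hr0 hrs hKabs
    simpa [mul_comm] using this
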